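/- Nested safe sets under linear class 𝒦 functions: with ψ₀ = h and ψ_i = ψ_{i-1}' + γ_i ψ_{i-1} (γ_i > 0) along a solution, if ψ_i(0) ≥ 0 for all i = 0, …, r-1 and ψ_r(t) ≥ 0 for all t ≥ 0, then ψ_i(t) ≥ 0 for every i = 0, …, r-1 and all t ≥ 0. -/

import Mathlib

lemma comparison_step (f g : ℝ → ℝ) (c : ℝ) (hc : 0 < c)
    (hd : ∀ t : ℝ, HasDerivAt f (g t - c * f t) t)
    (hg : ∀ t : ℝ, 0 ≤ t → 0 ≤ g t) (h0 : 0 ≤ f 0) :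
    ∀ t : ℝ, 0 ≤ t → 0 ≤ f t := by
  set F : ℝ → ℝ := fun t => Real.exp (c * t) * f t with hF
  have hF' : ∀ t : ℝ, HasDerivAt F (Real.exp (c * t) * g t) t := by
    intro t
    have he : HasDerivAt (fun t : ℝ => Real.exp (c * t)) (c * Real.exp (c * t)) t := by
      have := (Real.hasDerivAt_exp (c * t)).comp t ((hasDerivAt_id t).const_mul c)
      simpa [mul_comm, Function.comp_def] using this
    have := he.mul (hd t)
    exact this.congr_deriv (by ring)
  have hmono : MonotoneOn F (Set.Ici (0 : ℝ)) := by
    apply monotoneOn_of_deriv_nonneg (convex_Ici 0)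
    · exact fun t _ => (hF' t).continuousAt.continuousWithinAt
    · exact fun t _ => (hF' t).differentiableAt.differentiableWithinAt
    · intro t ht
      rw [(hF' t).deriv]
      have : 0 ≤ t := le_of_lt (by simpa using ht)
      exact mul_nonneg (Real.exp_pos _).le (hg t this)
  intro t ht
  have h1 : F 0 ≤ F t := hmono (Set.self_mem_Ici) ht ht
  have h2 : F 0 = f 0 := by simp [hF]
  have h3 : 0 ≤ F t := le_trans (h2 ▸ h0) h1
  have hF3 : F t = Real.exp (c * t) * f t := rfl
  have hexp : 0 < Real.exp (c * t) := Real.exp_pos _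
  nlinarith [h3, hF3]

/-- nested safe sets for the order-`r` HOCBF chain with linear class 𝒦 functions:
`ψ 0 = h`, `ψ (i+1) = (ψ i)' + γ (i+1) * ψ i` (encoded via the derivative hypothesis). -/
theorem stmt_9 (r : ℕ) (hr : 0 < r) (h : ℝ → ℝ)
    (ψ : ℕ → ℝ → ℝ) (γ : ℕ → ℝ) (hγ : ∀ i, 0 < γ i)
    (hψ0 : ψ 0 = h)
    (hchain : ∀ i < r, ∀ t : ℝ, HasDerivAt (ψ i) (ψ (i + 1) t - γ (i + 1) * ψ i t) t)
    (hinit : ∀ i < r, 0 ≤ ψ i 0)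
    (hlast : ∀ t : ℝ, 0 ≤ t → 0 ≤ ψ r t) :
    ∀ i < r, ∀ t : ℝ, 0 ≤ t → 0 ≤ ψ i t := by
  have key : ∀ k, ∀ i, i + k = r → ∀ t : ℝ, 0 ≤ t → 0 ≤ ψ i t := by
    intro k
    induction k with
    | zero => intro i hi t ht; simp at hi; subst hi; exact hlast t ht
    | succ k ih =>
      intro i hi t ht
      have hiltr : i < r := by omega
      have hnext : ∀ t : ℝ, 0 ≤ t → 0 ≤ ψ (i + 1) t := ih (i + 1) (by omega)
      exact comparison_step (ψ i) (ψ (i + 1)) (γ (i + 1)) (hγ (i + 1))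
        (hchain i hiltr) hnext (hinit i hiltr) t ht
  intro i hi t ht
  exact key (r - i) i (by omega) t ht
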